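/- Let (X, μ, T) be a probability-measure-preserving system and g : X → ℝ an integrable function. Suppose for μ-a.e. x, the Birkhoff averages (1/n) Σ_{i=0}^{n-1} g(Tⁱ x) converge to a limit L(x) ≤ α₂, and g(x) > α₁ for all x, with α₁ < α₂ < α₃. Let Δ = {x : ∀ n ≥ 1, (1/n) Σ_{i=0}^{n-1} g(Tⁱ x) ≤ α₃}. If T is ergodic and L = ∫ g dμ ≤ α₂ < α₃, then μ(Δ) ≥ (α₃ - α₂)/(α₃ - α₁). -/

import Mathlib

open MeasureTheory Filter Set

namespace Stmt7Aux

variable {X : Type*} [MeasurableSpace X]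

/-- Birkhoff sums. -/
noncomputable def SS (T : X → X) (f : X → ℝ) (n : ℕ) (x : X) : ℝ :=
  ∑ i ∈ Finset.range n, f (T^[i] x)

/-- Running maximum `max (0, S₁, …, S_N)`. -/
noncomputable def MM (T : X → X) (f : X → ℝ) : ℕ → X → ℝ
  | 0, _ => 0
  | (N + 1), x => max (MM T f N x) (SS T f (N + 1) x)

lemma SS_succ (T : X → X) (f : X → ℝ) (n : ℕ) (x : X) :
    SS T f (n + 1) x = f x + SS T f n (T x) := by
  unfold SS
  rw [Finset.sum_range_succ']
  simp only [Function.iterate_succ_apply, Function.iterate_zero_apply]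
  ring

lemma MM_nonneg (T : X → X) (f : X → ℝ) (N : ℕ) (x : X) : 0 ≤ MM T f N x := by
  induction N with
  | zero => simp [MM]
  | succ N ih => exact le_trans ih (le_max_left _ _)

lemma SS_le_MM (T : X → X) (f : X → ℝ) {n N : ℕ} (h : n ≤ N) (x : X) :
    SS T f n x ≤ MM T f N x := by
  induction N with
  | zero =>
      interval_cases n
      simp [SS, MM]
  | succ N ih =>
      rcases Nat.lt_or_ge n (N + 1) with h' | h'
      · exact le_trans (ih (Nat.lt_succ_iff.mp h')) (le_max_left _ _)
      · have : n = N + 1 := le_antisymm h h'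
        subst this
        exact le_max_right _ _

lemma MM_cases (T : X → X) (f : X → ℝ) (N : ℕ) (x : X) :
    MM T f N x = 0 ∨ ∃ n, 1 ≤ n ∧ n ≤ N ∧ MM T f N x = SS T f n x := by
  induction N with
  | zero => exact Or.inl rfl
  | succ N ih =>
      rcases le_or_gt (SS T f (N + 1) x) (MM T f N x) with h | h
      · have hMM : MM T f (N + 1) x = MM T f N x := max_eq_left h
        rcases ih with h0 | ⟨n, h1, h2, h3⟩
        · exact Or.inl (by rw [hMM, h0])
        · exact Or.inr ⟨n, h1, Nat.le_succ_of_le h2, by rw [hMM, h3]⟩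
      · exact Or.inr ⟨N + 1, Nat.succ_le_succ (Nat.zero_le _), le_rfl, max_eq_right h.le⟩

lemma MM_mono (T : X → X) (f : X → ℝ) {N N' : ℕ} (h : N ≤ N') (x : X) :
    MM T f N x ≤ MM T f N' x := by
  induction N' with
  | zero =>
      interval_cases N
      exact le_rfl
  | succ N' ih =>
      rcases Nat.lt_or_ge N (N' + 1) with h' | h'
      · exact le_trans (ih (Nat.lt_succ_iff.mp h')) (le_max_left _ _)
      · have : N = N' + 1 := le_antisymm h h'
        subst this
        exact le_rfl

/-- Key pointwise inequality: where `MM N x > 0`, `MM N x ≤ f x + MM N (T x)`. -/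
lemma MM_key (T : X → X) (f : X → ℝ) (N : ℕ) (x : X) (hx : 0 < MM T f N x) :
    MM T f N x ≤ f x + MM T f N (T x) := by
  rcases MM_cases T f N x with h0 | ⟨n, h1, h2, h3⟩
  · rw [h0] at hx; exact absurd hx (lt_irrefl _)
  · obtain ⟨m, rfl⟩ := Nat.exists_eq_add_of_le h1
    rw [h3, add_comm 1 m, SS_succ]
    have : SS T f m (T x) ≤ MM T f N (T x) :=
      SS_le_MM T f (le_trans (Nat.le_succ m) (by omega)) (T x)
    linarith

lemma measurable_SS (T : X → X) (f : X → ℝ) (hT : Measurable T) (hf : Measurable f) (n : ℕ) :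
    Measurable (SS T f n) := by
  unfold SS
  exact Finset.measurable_sum _ fun i _ => hf.comp (hT.iterate i)

lemma measurable_MM (T : X → X) (f : X → ℝ) (hT : Measurable T) (hf : Measurable f) (N : ℕ) :
    Measurable (MM T f N) := by
  induction N with
  | zero => exact measurable_const
  | succ N ih => exact ih.max (measurable_SS T f hT hf (N + 1))

variable {μ : Measure X}

lemma integrable_SS (hT : MeasurePreserving T μ μ) (hf : Integrable f μ) (n : ℕ) :
    Integrable (SS T f n) μ := by
  unfold SS
  exact integrable_finset_sum _ fun i _ =>
    ((hT.iterate i).integrable_comp hf.aestronglyMeasurable).mpr hf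

lemma integrable_MM (hT : MeasurePreserving T μ μ) (hf : Integrable f μ) (N : ℕ) :
    Integrable (MM T f N) μ := by
  induction N with
  | zero => exact integrable_zero _ _ _
  | succ N ih =>
      refine (ih.sup (integrable_SS hT hf (N + 1))).congr
        (Filter.Eventually.of_forall fun x => ?_)
      simp [MM, Pi.sup_apply]

/-- The maximal ergodic theorem (Garsia's proof). -/
lemma maximal_ergodic [IsFiniteMeasure μ] {T : X → X} {f : X → ℝ}
    (hT : MeasurePreserving T μ μ) (hf : Integrable f μ) (hfm : Measurable f) :
    0 ≤ ∫ x in {x | ∃ n, 1 ≤ n ∧ 0 < SS T f n x}, f x ∂μ := by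
  have hTm : Measurable T := hT.measurable
  set E : ℕ → Set X := fun N => {x | 0 < MM T f N x} with hE
  have hEmeas : ∀ N, MeasurableSet (E N) := fun N =>
    measurableSet_lt measurable_const (measurable_MM T f hTm hfm N)
  have hEmono : Monotone E := fun N N' h x hx =>
    lt_of_lt_of_le hx (MM_mono T f h x)
  have hEunion : (⋃ N, E N) = {x | ∃ n, 1 ≤ n ∧ 0 < SS T f n x} := by
    ext x
    simp only [mem_iUnion, mem_setOf_eq, hE]
    constructor
    · rintro ⟨N, hN⟩
      rcases MM_cases T f N x with h0 | ⟨n, h1, _, h3⟩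
      · rw [h0] at hN; exact absurd hN (lt_irrefl _)
      · exact ⟨n, h1, h3 ▸ hN⟩
    · rintro ⟨n, h1, hn⟩
      exact ⟨n, lt_of_lt_of_le hn (SS_le_MM T f le_rfl x)⟩
  -- each finite-level integral is nonnegative
  have hstep : ∀ N, 0 ≤ ∫ x in E N, f x ∂μ := by
    intro N
    have hMi : Integrable (MM T f N) μ := integrable_MM hT hf N
    have hMTi : Integrable (fun x => MM T f N (T x)) μ :=
      (hT.integrable_comp hMi.aestronglyMeasurable).mpr hMi
    have hIT : ∫ x, MM T f N (T x) ∂μ = ∫ x, MM T f N x ∂μ := by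
      rw [← integral_map hTm.aemeasurable]
      · rw [hT.map_eq]
      · rw [hT.map_eq]; exact hMi.aestronglyMeasurable
    -- ∫_{E N} MM N = ∫ MM N
    have h1 : ∫ x in E N, MM T f N x ∂μ = ∫ x, MM T f N x ∂μ := by
      have := integral_add_compl (hEmeas N) hMi
      have hzero : ∫ x in (E N)ᶜ, MM T f N x ∂μ = 0 := by
        have : ∀ x ∈ (E N)ᶜ, MM T f N x = 0 := by
          intro x hx
          have : ¬ 0 < MM T f N x := hx
          exact le_antisymm (not_lt.mp this) (MM_nonneg T f N x)
        calc ∫ x in (E N)ᶜ, MM T f N x ∂μ = ∫ _ in (E N)ᶜ, (0 : ℝ) ∂μ := by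
              exact setIntegral_congr_fun (hEmeas N).compl this
          _ = 0 := by simp
      linarith
    have h2 : ∫ x in E N, MM T f N (T x) ∂μ ≤ ∫ x, MM T f N x ∂μ := by
      rw [← hIT]
      exact setIntegral_le_integral hMTi
        (Eventually.of_forall fun x => MM_nonneg T f N (T x))
    have h3 : ∫ x in E N, (MM T f N x - MM T f N (T x)) ∂μ ≤ ∫ x in E N, f x ∂μ := by
      apply setIntegral_mono_on (hMi.sub hMTi).integrableOn hf.integrableOn (hEmeas N)
      intro x hx
      have := MM_key T f N x hx
      simp only [Pi.sub_apply]
      linarith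
    have h4 : ∫ x in E N, (MM T f N x - MM T f N (T x)) ∂μ
        = ∫ x in E N, MM T f N x ∂μ - ∫ x in E N, MM T f N (T x) ∂μ :=
      integral_sub hMi.integrableOn hMTi.integrableOn
    rw [h4, h1] at h3
    linarith
  -- pass to the limit
  have hten := tendsto_setIntegral_of_monotone hEmeas hEmono
    (hf.integrableOn : IntegrableOn f (⋃ N, E N) μ)
  rw [hEunion] at hten
  exact ge_of_tendsto' hten hstep

end Stmt7Aux

open Stmt7Aux

theorem stmt_7 {X : Type*} [MeasurableSpace X] (μ : Measure X) [IsProbabilityMeasure μ]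
    (T : X → X) (hT : Ergodic T μ)
    (g : X → ℝ) (hg : Integrable g μ)
    (α₁ α₂ α₃ : ℝ) (h12 : α₁ < α₂) (h23 : α₂ < α₃)
    (hlow : ∀ x, g x > α₁) (hint : ∫ x, g x ∂μ ≤ α₂) :
    (μ {x | ∀ n ≥ 1, (∑ i ∈ Finset.range n, g (T^[i] x)) / n ≤ α₃}).toReal
      ≥ (α₃ - α₂)/(α₃ - α₁) := by
  have hTP : MeasurePreserving T μ μ := hT.toMeasurePreserving
  have hTm : Measurable T := hTP.measurable
  -- measurable representative of g, bounded below by α₁ everywhere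
  set G : X → ℝ := fun x => max (hg.1.mk g x) α₁ with hGdef
  have hGg : G =ᵐ[μ] g := by
    filter_upwards [hg.1.ae_eq_mk] with x hx
    simp only [hGdef]
    rw [← hx, max_eq_left (hlow x).le]
  have hGmeas : Measurable G := hg.1.measurable_mk.max measurable_const
  have hGint : Integrable G μ := hg.congr hGg.symm
  have hGlow : ∀ x, α₁ ≤ G x := fun x => le_max_right _ _
  have hGavg : ∫ x, G x ∂μ ≤ α₂ := le_trans (le_of_eq (integral_congr_ae hGg)) hint
  -- apply the maximal ergodic theorem to f = G - α₃
  set f : X → ℝ := fun x => G x - α₃ with hfdef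
  have hfint : Integrable f μ := hGint.sub (integrable_const α₃)
  have hfmeas : Measurable f := hGmeas.sub measurable_const
  set E : Set X := {x | ∃ n, 1 ≤ n ∧ 0 < SS T f n x} with hEdef
  have hEmeas : MeasurableSet E := by
    have : E = ⋃ n, {x | 0 < SS T f (n + 1) x} := by
      ext x
      simp only [hEdef, mem_setOf_eq, mem_iUnion]
      constructor
      · rintro ⟨n, h1, hn⟩
        obtain ⟨m, rfl⟩ := Nat.exists_eq_add_of_le h1
        exact ⟨m, by rwa [add_comm 1 m] at hn⟩
      · rintro ⟨n, hn⟩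
        exact ⟨n + 1, Nat.succ_le_succ (Nat.zero_le _), hn⟩
    rw [this]
    exact MeasurableSet.iUnion fun n =>
      measurableSet_lt measurable_const (measurable_SS T f hTm hfmeas (n + 1))
  have hmax : 0 ≤ ∫ x in E, f x ∂μ := maximal_ergodic hTP hfint hfmeas
  -- the measure bound for Eᶜ
  have hsplit : ∫ x in E, f x ∂μ + ∫ x in Eᶜ, f x ∂μ = ∫ x, f x ∂μ :=
    integral_add_compl hEmeas hfint
  have htotal : ∫ x, f x ∂μ ≤ α₂ - α₃ := by
    have : ∫ x, f x ∂μ = (∫ x, G x ∂μ) - α₃ := by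
      rw [hfdef]
      rw [integral_sub hGint (integrable_const α₃)]
      simp
    linarith
  set m : ℝ := (μ Eᶜ).toReal with hm
  have hlowint : (α₁ - α₃) * m ≤ ∫ x in Eᶜ, f x ∂μ := by
    apply setIntegral_ge_of_const_le_real hEmeas.compl (measure_ne_top μ Eᶜ)
    · intro x _
      simp only [hfdef]
      linarith [hGlow x]
    · exact hfint.integrableOn
  have hmbound : (α₃ - α₂) / (α₃ - α₁) ≤ m := by
    rw [div_le_iff₀ (by linarith : (0:ℝ) < α₃ - α₁)]
    nlinarith
  -- relate Eᶜ to Δ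
  set Δ : Set X := {x | ∀ n ≥ 1, (∑ i ∈ Finset.range n, g (T^[i] x)) / n ≤ α₃} with hΔ
  have hae : ∀ᵐ x ∂μ, ∀ i : ℕ, g (T^[i] x) = G (T^[i] x) := by
    rw [ae_all_iff]
    intro i
    exact (hTP.iterate i).quasiMeasurePreserving.ae_eq_comp hGg.symm
  set A : Set X := {x | ∀ i : ℕ, g (T^[i] x) = G (T^[i] x)} with hA
  have hAnull : μ Aᶜ = 0 := by
    have := ae_iff.mp hae
    simpa [hA, Set.compl_setOf] using this
  have hsub : Eᶜ \ Aᶜ ⊆ Δ := by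
    rintro x ⟨hxE, hxA⟩
    have hxA' : x ∈ A := not_not.mp hxA
    intro n hn
    have hSS : SS T f n x ≤ 0 := by
      by_contra h
      exact hxE ⟨n, hn, lt_of_not_ge h⟩
    have hsum : SS T f n x = (∑ i ∈ Finset.range n, G (T^[i] x)) - n * α₃ := by
      simp [SS, hfdef, Finset.sum_sub_distrib]
    have hgG : (∑ i ∈ Finset.range n, g (T^[i] x)) = ∑ i ∈ Finset.range n, G (T^[i] x) :=
      Finset.sum_congr rfl fun i _ => hxA' i
    have hnpos : (0:ℝ) < n := by exact_mod_cast hn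
    rw [div_le_iff₀ hnpos, hgG]
    nlinarith
  have hμΔ : μ Eᶜ ≤ μ Δ := by
    calc μ Eᶜ = μ (Eᶜ \ Aᶜ) := (measure_diff_null hAnull).symm
      _ ≤ μ Δ := measure_mono hsub
  have : m ≤ (μ Δ).toReal :=
    ENNReal.toReal_mono (measure_ne_top μ Δ) hμΔ
  exact le_trans hmbound this
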